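/- Let p > 1 and define g(t) := (1 - t^{1-p})/(1 - t) for t ∈ (0,1). Then g is increasing on (0,1). -/

import Mathlib

/-- For `p > 1`, the function `g(t) = (1 - t^{1-p})/(1 - t)` is increasing on `(0,1)`. -/
theorem stmt_3 (p : ℝ) (hp : 1 < p) :
    StrictMonoOn (fun t : ℝ => (1 - t ^ (1 - p)) / (1 - t)) (Set.Ioo (0 : ℝ) 1) := by
  have h1 : ∀ x ∈ Set.Ioo (0:ℝ) 1, HasDerivAt (fun t : ℝ => (1 - t ^ (1 - p)) / (1 - t))
      (((p - 1) * x ^ (-p) * (1 - x) + (1 - x ^ (1 - p))) / (1 - x) ^ 2) x := by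
    intro x hx
    have hx0 : x ≠ 0 := ne_of_gt hx.1
    have hx1 : (1:ℝ) - x ≠ 0 := by have := hx.2; intro h; linarith
    have hd1 : HasDerivAt (fun t : ℝ => 1 - t ^ (1 - p)) ((p - 1) * x ^ (-p)) x := by
      have h := Real.hasDerivAt_rpow_const (p := 1 - p) (Or.inl hx0)
      have h' := h.const_sub (1:ℝ)
      refine h'.congr_deriv ?_
      rw [show (1 - p) - 1 = -p by ring]
      ring
    have hd2 : HasDerivAt (fun t : ℝ => 1 - t) (-1) x := by
      simpa using (hasDerivAt_id x).const_sub (1:ℝ)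
    have h := hd1.div hd2 hx1
    refine h.congr_deriv ?_
    ring
  apply strictMonoOn_of_deriv_pos (convex_Ioo 0 1)
  · exact fun x hx => ((h1 x hx).differentiableAt.continuousAt).continuousWithinAt
  · intro x hx
    rw [interior_Ioo] at hx
    rw [(h1 x hx).deriv]
    have hx0 : (0:ℝ) < x := hx.1
    have hx1 : x < 1 := hx.2
    have hxp : (0:ℝ) < x ^ p := Real.rpow_pos_of_pos hx0 p
    -- Bernoulli: x ^ p > 1 + p * (x - 1)
    have hb : 1 + p * (x - 1) < x ^ p := by
      have := one_add_mul_self_lt_rpow_one_add (s := x - 1)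
        (by linarith) (by intro h; apply absurd (by linarith : x = 1); linarith) hp
      simpa using this
    have key : 0 < (p - 1) * (1 - x) + x ^ p - x := by nlinarith
    have e1 : x ^ p * x ^ (-p) = 1 := by
      rw [← Real.rpow_add hx0]; simp
    have e2 : x ^ p * x ^ (1 - p) = x := by
      rw [← Real.rpow_add hx0]; simp
    have hN : 0 < (p - 1) * x ^ (-p) * (1 - x) + (1 - x ^ (1 - p)) := by
      have h2 : 0 < x ^ p * ((p - 1) * x ^ (-p) * (1 - x) + (1 - x ^ (1 - p))) := by
        have expand : x ^ p * ((p - 1) * x ^ (-p) * (1 - x) + (1 - x ^ (1 - p)))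
            = (p - 1) * (x ^ p * x ^ (-p)) * (1 - x) + x ^ p - x ^ p * x ^ (1 - p) := by ring
        rw [expand, e1, e2]; nlinarith
      by_contra hN
      push_neg at hN
      exact absurd h2 (not_lt.mpr (mul_nonpos_of_nonneg_of_nonpos hxp.le hN))
    have hd : (0:ℝ) < (1 - x) ^ 2 := pow_pos (by linarith) 2
    exact div_pos hN hd
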